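/- Let Q = (0,1)^{d−1} × (−1, 0) and S = [0,1]^{d−1} × {0}. Let ρ⁰, ρ¹ be probability measures on the closure of Q of the form ρⁱ = ρⁱ_Q + ρⁱ_S with ρⁱ_Q having density bounded by k̄ on Q and ρⁱ_S concentrated on S. With ℓ = W₁(ρ⁰, ρ¹), for every Lipschitz function j: ∫_Q j (ρ⁰_Q − ρ¹_Q) ≤ 2 Lip(j)·ℓ + c(k̄)·‖j‖_∞ · ℓ^{1/2}. -/

import Mathlib

open MeasureTheory
open scoped ENNReal NNReal

noncomputable def IsCoupling {d : ℕ} (γ : Measure (EuclideanSpace ℝ (Fin d) × EuclideanSpace ℝ (Fin d)))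
    (μ ν : Measure (EuclideanSpace ℝ (Fin d))) : Prop :=
  γ.map Prod.fst = μ ∧ γ.map Prod.snd = ν

/-- The Wasserstein distance of order `p` (defined as an infimum over couplings). -/
noncomputable def Wass {d : ℕ} (p : ℝ) (μ ν : Measure (EuclideanSpace ℝ (Fin d))) : ℝ :=
  sInf { c : ℝ | ∃ γ : Measure (EuclideanSpace ℝ (Fin d) × EuclideanSpace ℝ (Fin d)),
    IsCoupling γ μ ν ∧ c = (∫ z, dist z.1 z.2 ^ p ∂γ) ^ (1/p) }

/-- The open box `(0,1)^{d} × (-1,0)` in `ℝ^{d+1}`. -/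
def boxQ (d : ℕ) : Set (EuclideanSpace ℝ (Fin (d+1))) :=
  {x | (∀ i : Fin d, x i.castSucc ∈ Set.Ioo (0:ℝ) 1) ∧ x (Fin.last d) ∈ Set.Ioo (-1:ℝ) 0}

/-- The top face `S = [0,1]^{d} × {0}` in `ℝ^{d+1}`. -/
def faceS (d : ℕ) : Set (EuclideanSpace ℝ (Fin (d+1))) :=
  {x | (∀ i : Fin d, x i.castSucc ∈ Set.Icc (0:ℝ) 1) ∧ x (Fin.last d) = 0}

section Helpers

variable {d : ℕ}

lemma contApply (i : Fin (d+1)) : Continuous (fun x : EuclideanSpace ℝ (Fin (d+1)) => x i) :=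
  (EuclideanSpace.proj (𝕜 := ℝ) i).continuous

lemma isOpen_boxQ : IsOpen (boxQ d) := by
  have : boxQ d = (⋂ i : Fin d, (fun x : EuclideanSpace ℝ (Fin (d+1)) => x i.castSucc) ⁻¹' Set.Ioo (0:ℝ) 1)
      ∩ ((fun x : EuclideanSpace ℝ (Fin (d+1)) => x (Fin.last d)) ⁻¹' Set.Ioo (-1:ℝ) 0) := by
    ext x; simp [boxQ, Set.mem_iInter]
  rw [this]
  exact (isOpen_iInter_of_finite fun i => isOpen_Ioo.preimage (contApply _)).inter
    (isOpen_Ioo.preimage (contApply _))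

lemma isClosed_faceS : IsClosed (faceS d) := by
  have : faceS d = (⋂ i : Fin d, (fun x : EuclideanSpace ℝ (Fin (d+1)) => x i.castSucc) ⁻¹' Set.Icc (0:ℝ) 1)
      ∩ ((fun x : EuclideanSpace ℝ (Fin (d+1)) => x (Fin.last d)) ⁻¹' {(0:ℝ)}) := by
    ext x; simp [faceS, Set.mem_iInter]
  rw [this]
  exact (isClosed_iInter fun i => isClosed_Icc.preimage (contApply _)).inter
    (isClosed_singleton.preimage (contApply _))

lemma faceS_subset_closure : faceS d ⊆ closure (boxQ d) := by
  intro x hx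
  obtain ⟨hx1, hx2⟩ := hx
  set p : EuclideanSpace ℝ (Fin (d+1)) := WithLp.toLp 2 (fun i => if i = Fin.last d then (-1/2 : ℝ) else 1/2) with hp
  have key : ∀ t : ℝ, t ∈ Set.Ioc (0:ℝ) 1 → x + t • (p - x) ∈ boxQ d := by
    intro t ht
    have hco : ∀ i, (x + t • (p - x)) i = x i + t * (p i - x i) := by
      intro i
      simp [PiLp.add_apply, PiLp.smul_apply, PiLp.sub_apply, smul_eq_mul]
    constructor
    · intro i
      have h1 := (hx1 i).1
      have h2 := (hx1 i).2
      have hpi : p i.castSucc = 1/2 := by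
        simp only [hp, PiLp.toLp_apply]
        rw [if_neg]
        exact (Fin.castSucc_lt_last i).ne
      rw [hco, hpi]
      constructor
      · nlinarith [ht.1, ht.2]
      · nlinarith [ht.1, ht.2]
    · have hpl : p (Fin.last d) = -1/2 := by simp [hp]
      rw [hco, hpl, hx2]
      constructor
      · nlinarith [ht.1, ht.2]
      · nlinarith [ht.1, ht.2]
  have htend : Filter.Tendsto (fun t : ℝ => x + t • (p - x)) (nhdsWithin 0 (Set.Ioi 0)) (nhds x) := by
    have : Filter.Tendsto (fun t : ℝ => x + t • (p - x)) (nhds 0) (nhds x) := by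
      have hc : Continuous (fun t : ℝ => x + t • (p - x)) :=
        continuous_const.add (continuous_id.smul continuous_const)
      simpa using hc.tendsto (0:ℝ)
    exact this.mono_left nhdsWithin_le_nhds
  refine mem_closure_of_tendsto htend ?_
  filter_upwards [Ioc_mem_nhdsGT_of_mem (by norm_num : (0:ℝ) ∈ Set.Ico (0:ℝ) 1)] with t ht
  exact key t ht

lemma dist_coord_le (x y : EuclideanSpace ℝ (Fin (d+1))) (i : Fin (d+1)) :
    |x i - y i| ≤ dist x y := by
  rw [EuclideanSpace.dist_eq]
  have h1 : |x i - y i| = Real.sqrt (dist (x i) (y i) ^ 2) := by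
    rw [Real.dist_eq, Real.sqrt_sq_eq_abs, abs_abs]
  rw [h1]
  apply Real.sqrt_le_sqrt
  exact Finset.single_le_sum (f := fun i => dist (x i) (y i) ^ 2)
    (fun j _ => sq_nonneg _) (Finset.mem_univ i)

lemma norm_le_of_mem_boxQ {x : EuclideanSpace ℝ (Fin (d+1))} (hx : x ∈ boxQ d) :
    ‖x‖ ≤ Real.sqrt (d+1) := by
  rw [EuclideanSpace.norm_eq]
  apply Real.sqrt_le_sqrt
  have : ∀ i : Fin (d+1), ‖x i‖ ^ 2 ≤ 1 := by
    intro i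
    induction i using Fin.lastCases with
    | last =>
      have := hx.2
      rw [Real.norm_eq_abs, sq_abs]
      nlinarith [this.1, this.2]
    | cast j =>
      have := hx.1 j
      rw [Real.norm_eq_abs, sq_abs]
      nlinarith [this.1, this.2]
  calc ∑ i, ‖x i‖ ^ 2 ≤ ∑ _i : Fin (d+1), (1:ℝ) := Finset.sum_le_sum fun i _ => this i
    _ = (d+1 : ℝ) := by simp

lemma norm_le_of_mem_closure {x : EuclideanSpace ℝ (Fin (d+1))} (hx : x ∈ closure (boxQ d)) :
    ‖x‖ ≤ Real.sqrt (d+1) := by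
  have : closure (boxQ d) ⊆ Metric.closedBall 0 (Real.sqrt (d+1)) := by
    apply closure_minimal _ Metric.isClosed_closedBall
    intro y hy
    simpa [Metric.mem_closedBall] using norm_le_of_mem_boxQ hy
  simpa [Metric.mem_closedBall] using this hx

lemma volume_strip (t : ℝ) :
    volume {x : EuclideanSpace ℝ (Fin (d+1)) | x ∈ boxQ d ∧ -t < x (Fin.last d)} ≤ ENNReal.ofReal t := by
  set s : Fin (d+1) → Set ℝ := fun i => if i = Fin.last d then Set.Ioo (-t) 0 else Set.Ioo 0 1 with hs
  have hsub : {x : EuclideanSpace ℝ (Fin (d+1)) | x ∈ boxQ d ∧ -t < x (Fin.last d)}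
      ⊆ (MeasurableEquiv.toLp 2 (Fin (d+1) → ℝ)).symm ⁻¹' (Set.univ.pi s) := by
    intro x hx
    intro i _
    simp only [hs]
    induction i using Fin.lastCases with
    | last =>
      simp only [if_pos rfl]
      exact ⟨hx.2, hx.1.2.2⟩
    | cast j =>
      rw [if_neg (Fin.castSucc_lt_last j).ne]
      exact hx.1.1 j
  calc volume {x : EuclideanSpace ℝ (Fin (d+1)) | x ∈ boxQ d ∧ -t < x (Fin.last d)}
      ≤ volume ((MeasurableEquiv.toLp 2 (Fin (d+1) → ℝ)).symm ⁻¹' (Set.univ.pi s)) :=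
        measure_mono hsub
    _ = volume (Set.univ.pi s) := by
        rw [(EuclideanSpace.volume_preserving_symm_measurableEquiv_toLp (Fin (d+1))).measure_preimage]
        refine (MeasurableSet.univ_pi fun i => ?_).nullMeasurableSet
        simp only [hs]
        split <;> exact measurableSet_Ioo
    _ = ∏ i, volume (s i) := volume_pi_pi s
    _ ≤ ENNReal.ofReal t := by
        rw [Finset.prod_eq_single (Fin.last d)]
        · simp only [hs, if_pos rfl, Real.volume_Ioo]
          simp
        · intro i _ hi
          simp only [hs, if_neg hi, Real.volume_Ioo]
          norm_num
        · simp

lemma boxQ_disjoint_faceS : boxQ d ∩ faceS d = ∅ := by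
  ext x
  simp only [Set.mem_inter_iff, Set.mem_empty_iff_false, iff_false]
  rintro ⟨h1, h2⟩
  exact absurd h2.2 (ne_of_lt h1.2.2)

end Helpers
theorem stmt3 (d : ℕ) (kbar : ℝ) (hk : 0 < kbar) :
    ∃ c : ℝ, 0 ≤ c ∧
      ∀ (ρ0Q ρ1Q ρ0S ρ1S : Measure (EuclideanSpace ℝ (Fin (d+1))))
        (f0 f1 : EuclideanSpace ℝ (Fin (d+1)) → ℝ≥0∞),
        ρ0Q = (volume.restrict (boxQ d)).withDensity f0 →
        ρ1Q = (volume.restrict (boxQ d)).withDensity f1 →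
        (∀ᵐ x ∂(volume.restrict (boxQ d)), f0 x ≤ ENNReal.ofReal kbar) →
        (∀ᵐ x ∂(volume.restrict (boxQ d)), f1 x ≤ ENNReal.ofReal kbar) →
        ρ0S (faceS d)ᶜ = 0 → ρ1S (faceS d)ᶜ = 0 →
        IsProbabilityMeasure (ρ0Q + ρ0S) → IsProbabilityMeasure (ρ1Q + ρ1S) →
        ∀ (j : EuclideanSpace ℝ (Fin (d+1)) → ℝ) (Lj B : ℝ≥0),
          LipschitzWith Lj j → (∀ x ∈ closure (boxQ d), |j x| ≤ B) →
          (∫ x, j x ∂ρ0Q) - (∫ x, j x ∂ρ1Q) ≤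
            2 * (Lj : ℝ) * Wass 1 (ρ0Q + ρ0S) (ρ1Q + ρ1S)
              + c * B * (Wass 1 (ρ0Q + ρ0S) (ρ1Q + ρ1S)) ^ (1/2 : ℝ) := by
  classical
  refine ⟨2*(1+kbar), by positivity, ?_⟩
  intro ρ0Q ρ1Q ρ0S ρ1S f0 f1 h0Q h1Q hf0 hf1 h0S h1S hP0 hP1 j Lj B hLip hB
  haveI := hP0; haveI := hP1
  have hQm : MeasurableSet (boxQ d) := isOpen_boxQ.measurableSet
  have hSm : MeasurableSet (faceS d) := isClosed_faceS.measurableSet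
  set μ := ρ0Q + ρ0S with hμdef
  set ν := ρ1Q + ρ1S with hνdef
  -- withDensity measures vanish outside boxQ
  have hwd : ∀ (f : EuclideanSpace ℝ (Fin (d+1)) → ℝ≥0∞) (A : Set (EuclideanSpace ℝ (Fin (d+1)))),
      MeasurableSet A → A ∩ boxQ d = ∅ → ((volume.restrict (boxQ d)).withDensity f) A = 0 := by
    intro f A hA hAQ
    rw [withDensity_apply _ hA, Measure.restrict_restrict hA, hAQ]
    simp
  have hconc : ∀ (ρQ ρS : Measure (EuclideanSpace ℝ (Fin (d+1))))
      (f : EuclideanSpace ℝ (Fin (d+1)) → ℝ≥0∞),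
      ρQ = (volume.restrict (boxQ d)).withDensity f → ρS (faceS d)ᶜ = 0 →
      (ρQ + ρS) ((boxQ d ∪ faceS d)ᶜ) = 0 := by
    intro ρQ ρS f hQ hS
    rw [Measure.add_apply]
    have h1 : ρQ ((boxQ d ∪ faceS d)ᶜ) = 0 := by
      apply measure_mono_null (Set.compl_subset_compl.mpr Set.subset_union_left)
      rw [hQ]; exact hwd f _ hQm.compl (Set.compl_inter_self _)
    have h2 : ρS ((boxQ d ∪ faceS d)ᶜ) = 0 :=
      measure_mono_null (Set.compl_subset_compl.mpr Set.subset_union_right) hS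
    rw [h1, h2, add_zero]
  have hsubcl : boxQ d ∪ faceS d ⊆ closure (boxQ d) :=
    Set.union_subset subset_closure faceS_subset_closure
  -- restriction to Sᶜ recovers the interior part
  have hrQ : ∀ (ρQ ρS : Measure (EuclideanSpace ℝ (Fin (d+1))))
      (f : EuclideanSpace ℝ (Fin (d+1)) → ℝ≥0∞),
      ρQ = (volume.restrict (boxQ d)).withDensity f → ρS (faceS d)ᶜ = 0 →
      (ρQ + ρS).restrict (faceS d)ᶜ = ρQ := by
    intro ρQ ρS f hQeq hSc
    rw [Measure.restrict_add]
    have h1 : ρS.restrict (faceS d)ᶜ = 0 := Measure.restrict_eq_zero.mpr hSc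
    have h2 : ρQ.restrict (faceS d)ᶜ = ρQ := by
      apply Measure.restrict_eq_self_of_ae_mem
      rw [ae_iff]
      have he : {x : EuclideanSpace ℝ (Fin (d+1)) | ¬ x ∈ (faceS d)ᶜ} = faceS d := by
        ext x; simp
      rw [he, hQeq]
      exact hwd f _ hSm (by rw [Set.inter_comm]; exact boxQ_disjoint_faceS)
    rw [h1, h2, add_zero]
  -- interior part bounded on strips
  have hstrip : ∀ (ρQ ρS : Measure (EuclideanSpace ℝ (Fin (d+1))))
      (f : EuclideanSpace ℝ (Fin (d+1)) → ℝ≥0∞),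
      ρQ = (volume.restrict (boxQ d)).withDensity f →
      (∀ᵐ x ∂(volume.restrict (boxQ d)), f x ≤ ENNReal.ofReal kbar) →
      ρS (faceS d)ᶜ = 0 → ∀ t : ℝ,
      (ρQ + ρS) {x | x ∈ boxQ d ∧ -t < x (Fin.last d)} ≤ ENNReal.ofReal (kbar * t) := by
    intro ρQ ρS f hQeq hfb hSc t
    set st : Set (EuclideanSpace ℝ (Fin (d+1))) := {x | x ∈ boxQ d ∧ -t < x (Fin.last d)} with hst
    have hstm : MeasurableSet st := by
      have : st = boxQ d ∩ ((fun x : EuclideanSpace ℝ (Fin (d+1)) => x (Fin.last d)) ⁻¹' Set.Ioi (-t)) := by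
        ext x; simp [hst, Set.mem_setOf_eq]
      rw [this]
      exact hQm.inter ((contApply _).measurable measurableSet_Ioi)
    have hsS : ρS st = 0 := by
      apply measure_mono_null _ hSc
      intro x hx
      intro hxS
      have : x ∈ boxQ d ∩ faceS d := ⟨hx.1, hxS⟩
      rw [boxQ_disjoint_faceS] at this
      exact this
    have hsQ : ρQ st ≤ ENNReal.ofReal kbar * ENNReal.ofReal t := by
      rw [hQeq, withDensity_apply _ hstm]
      calc ∫⁻ x in st, f x ∂(volume.restrict (boxQ d))
          ≤ ∫⁻ _x in st, ENNReal.ofReal kbar ∂(volume.restrict (boxQ d)) :=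
            lintegral_mono_ae (ae_restrict_of_ae hfb)
        _ = ENNReal.ofReal kbar * (volume.restrict (boxQ d)) st := by
            rw [setLIntegral_const]
        _ ≤ ENNReal.ofReal kbar * ENNReal.ofReal t := by
            apply mul_le_mul_right
            rw [Measure.restrict_apply hstm]
            refine le_trans (measure_mono ?_) (volume_strip t)
            intro x hx; exact hx.1
    calc (ρQ + ρS) st = ρQ st + ρS st := Measure.add_apply _ _ _
      _ ≤ ENNReal.ofReal kbar * ENNReal.ofReal t + 0 := by rw [hsS]; exact add_le_add_left hsQ 0
      _ = ENNReal.ofReal (kbar * t) := by rw [add_zero, ← ENNReal.ofReal_mul hk.le]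
  -- the Wasserstein infimum set
  set WS := { c : ℝ | ∃ γ : Measure (EuclideanSpace ℝ (Fin (d+1)) × EuclideanSpace ℝ (Fin (d+1))),
    IsCoupling γ μ ν ∧ c = (∫ z, dist z.1 z.2 ^ (1:ℝ) ∂γ) ^ (1/(1:ℝ)) } with hWS
  have hWeq : Wass 1 μ ν = sInf WS := rfl
  have hne : WS.Nonempty := by
    refine ⟨_, μ.prod ν, ⟨?_, ?_⟩, rfl⟩
    · rw [Measure.map_fst_prod]; simp
    · rw [Measure.map_snd_prod]; simp
  have hWSnonneg : ∀ c ∈ WS, 0 ≤ c := by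
    rintro c ⟨γ, hγ, rfl⟩
    apply Real.rpow_nonneg
    exact integral_nonneg fun z => Real.rpow_nonneg dist_nonneg 1
  set ℓ := Wass 1 μ ν with hℓdef
  have hℓ0 : 0 ≤ ℓ := by rw [hWeq]; exact le_csInf hne hWSnonneg
  have hjm : Measurable j := hLip.continuous.measurable
  -- the main estimate for each ε > 0
  have hmain : ∀ ε : ℝ, 0 < ε → (∫ x, j x ∂ρ0Q) - (∫ x, j x ∂ρ1Q) ≤
      (Lj:ℝ) * (ℓ + ε) + 2*(1+kbar) * (B:ℝ) * Real.sqrt (ℓ + ε) := by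
    intro ε hε
    obtain ⟨cv, hcv, hlt⟩ := Real.lt_sInf_add_pos hne hε
    rw [← hWeq] at hlt
    obtain ⟨γ, hcoup, rfl⟩ := hcv
    set L := ∫ z : EuclideanSpace ℝ (Fin (d+1)) × EuclideanSpace ℝ (Fin (d+1)),
      dist z.1 z.2 ∂γ with hLdef
    have hsimp : (∫ z : EuclideanSpace ℝ (Fin (d+1)) × EuclideanSpace ℝ (Fin (d+1)),
        dist z.1 z.2 ^ (1:ℝ) ∂γ) ^ (1/(1:ℝ)) = L := by
      norm_num [Real.rpow_one, hLdef]
    rw [hsimp] at hlt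
    haveI hγprob : IsProbabilityMeasure γ := by
      constructor
      have h := congrArg (fun m : Measure (EuclideanSpace ℝ (Fin (d+1))) => m Set.univ) hcoup.1
      simpa [Measure.map_apply measurable_fst MeasurableSet.univ] using h
    have hae1 : ∀ᵐ z ∂γ, z.1 ∈ boxQ d ∪ faceS d := by
      rw [ae_iff]
      have h : γ (Prod.fst ⁻¹' (boxQ d ∪ faceS d)ᶜ) = 0 := by
        rw [← Measure.map_apply measurable_fst (hQm.union hSm).compl, hcoup.1]
        exact hconc ρ0Q ρ0S f0 h0Q h0S
      exact h
    have hae2 : ∀ᵐ z ∂γ, z.2 ∈ boxQ d ∪ faceS d := by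
      rw [ae_iff]
      have h : γ (Prod.snd ⁻¹' (boxQ d ∪ faceS d)ᶜ) = 0 := by
        rw [← Measure.map_apply measurable_snd (hQm.union hSm).compl, hcoup.2]
        exact hconc ρ1Q ρ1S f1 h1Q h1S
      exact h
    -- integrability
    have hgm1 : Measurable (fun z : EuclideanSpace ℝ (Fin (d+1)) × EuclideanSpace ℝ (Fin (d+1)) =>
        ((faceS d)ᶜ.indicator j) z.1) := (hjm.indicator hSm.compl).comp measurable_fst
    have hgm2 : Measurable (fun z : EuclideanSpace ℝ (Fin (d+1)) × EuclideanSpace ℝ (Fin (d+1)) =>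
        ((faceS d)ᶜ.indicator j) z.2) := (hjm.indicator hSm.compl).comp measurable_snd
    have hind_le : ∀ x : EuclideanSpace ℝ (Fin (d+1)), x ∈ boxQ d ∪ faceS d →
        |((faceS d)ᶜ.indicator j) x| ≤ B := by
      intro x hx
      by_cases h : x ∈ (faceS d)ᶜ
      · rw [Set.indicator_of_mem h]; exact hB x (hsubcl hx)
      · rw [Set.indicator_of_notMem h]; simpa using B.2
    have hgi1 : Integrable (fun z : EuclideanSpace ℝ (Fin (d+1)) × EuclideanSpace ℝ (Fin (d+1)) =>
        ((faceS d)ᶜ.indicator j) z.1) γ := by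
      refine Integrable.mono' (integrable_const (B:ℝ)) hgm1.aestronglyMeasurable ?_
      filter_upwards [hae1] with z hz
      simpa [Real.norm_eq_abs] using hind_le _ hz
    have hgi2 : Integrable (fun z : EuclideanSpace ℝ (Fin (d+1)) × EuclideanSpace ℝ (Fin (d+1)) =>
        ((faceS d)ᶜ.indicator j) z.2) γ := by
      refine Integrable.mono' (integrable_const (B:ℝ)) hgm2.aestronglyMeasurable ?_
      filter_upwards [hae2] with z hz
      simpa [Real.norm_eq_abs] using hind_le _ hz
    have hdistc : Continuous (fun z : EuclideanSpace ℝ (Fin (d+1)) × EuclideanSpace ℝ (Fin (d+1)) =>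
        dist z.1 z.2) := continuous_fst.dist continuous_snd
    have hdisti : Integrable (fun z : EuclideanSpace ℝ (Fin (d+1)) × EuclideanSpace ℝ (Fin (d+1)) =>
        dist z.1 z.2) γ := by
      refine Integrable.mono' (integrable_const (2*Real.sqrt (d+1))) hdistc.measurable.aestronglyMeasurable ?_
      filter_upwards [hae1, hae2] with z h1 h2
      have e1 := norm_le_of_mem_closure (hsubcl h1)
      have e2 := norm_le_of_mem_closure (hsubcl h2)
      rw [Real.norm_eq_abs, abs_of_nonneg dist_nonneg]
      calc dist z.1 z.2 = ‖z.1 - z.2‖ := dist_eq_norm _ _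
        _ ≤ ‖z.1‖ + ‖z.2‖ := norm_sub_le _ _
        _ ≤ 2*Real.sqrt (d+1) := by linarith
    have hL0 : 0 ≤ L := integral_nonneg fun z => dist_nonneg
    -- integral identities
    have hint0 : ∫ x, j x ∂ρ0Q = ∫ z : EuclideanSpace ℝ (Fin (d+1)) × EuclideanSpace ℝ (Fin (d+1)),
        ((faceS d)ᶜ.indicator j) z.1 ∂γ := by
      rw [← hrQ ρ0Q ρ0S f0 h0Q h0S, ← integral_indicator hSm.compl, ← hμdef, ← hcoup.1,
        integral_map measurable_fst.aemeasurable]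
      exact ((hjm.indicator hSm.compl).stronglyMeasurable).aestronglyMeasurable
    have hint1 : ∫ x, j x ∂ρ1Q = ∫ z : EuclideanSpace ℝ (Fin (d+1)) × EuclideanSpace ℝ (Fin (d+1)),
        ((faceS d)ᶜ.indicator j) z.2 ∂γ := by
      rw [← hrQ ρ1Q ρ1S f1 h1Q h1S, ← integral_indicator hSm.compl, ← hνdef, ← hcoup.2,
        integral_map measurable_snd.aemeasurable]
      exact ((hjm.indicator hSm.compl).stronglyMeasurable).aestronglyMeasurable
    -- the exceptional set
    set Eset : Set (EuclideanSpace ℝ (Fin (d+1)) × EuclideanSpace ℝ (Fin (d+1))) :=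
      {z | ¬ (z.1 ∈ faceS d ↔ z.2 ∈ faceS d)} with hEdef
    have hEm : MeasurableSet Eset := by
      have he : Eset = ((Prod.fst ⁻¹' (faceS d)) ∩ (Prod.snd ⁻¹' (faceS d))ᶜ)
          ∪ ((Prod.fst ⁻¹' (faceS d))ᶜ ∩ (Prod.snd ⁻¹' (faceS d))) := by
        ext z
        by_cases h1 : z.1 ∈ faceS d <;> by_cases h2 : z.2 ∈ faceS d <;> simp [hEdef, h1, h2]
      rw [he]
      exact ((hSm.preimage measurable_fst).inter (hSm.preimage measurable_snd).compl).union
        ((hSm.preimage measurable_fst).compl.inter (hSm.preimage measurable_snd))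
    -- pointwise bound
    have hptw : ∀ᵐ z ∂γ, ((faceS d)ᶜ.indicator j) z.1 - ((faceS d)ᶜ.indicator j) z.2 ≤
        (Lj:ℝ) * dist z.1 z.2 + Eset.indicator (fun _ => (B:ℝ)) z := by
      filter_upwards [hae1, hae2] with z h1 h2
      have hb1 := abs_le.mp (hB _ (hsubcl h1))
      have hb2 := abs_le.mp (hB _ (hsubcl h2))
      have hd : |j z.1 - j z.2| ≤ (Lj:ℝ) * dist z.1 z.2 := by
        have := hLip.dist_le_mul z.1 z.2
        rwa [Real.dist_eq] at this
      have hd' := abs_le.mp hd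
      have hld : 0 ≤ (Lj:ℝ) * dist z.1 z.2 := mul_nonneg Lj.coe_nonneg dist_nonneg
      have hindnn : 0 ≤ Eset.indicator (fun _ => (B:ℝ)) z :=
        Set.indicator_nonneg (fun _ _ => B.coe_nonneg) z
      by_cases c1 : z.1 ∈ faceS d <;> by_cases c2 : z.2 ∈ faceS d
      · rw [Set.indicator_of_notMem (not_not_intro c1), Set.indicator_of_notMem (not_not_intro c2)]
        linarith
      · rw [Set.indicator_of_notMem (not_not_intro c1), Set.indicator_of_mem (Set.mem_compl c2),
          Set.indicator_of_mem (show z ∈ Eset by simp [hEdef, c1, c2])]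
        linarith [hb2.1]
      · rw [Set.indicator_of_mem (Set.mem_compl c1), Set.indicator_of_notMem (not_not_intro c2),
          Set.indicator_of_mem (show z ∈ Eset by simp [hEdef, c1, c2])]
        linarith [hb1.2]
      · rw [Set.indicator_of_mem (Set.mem_compl c1), Set.indicator_of_mem (Set.mem_compl c2)]
        linarith [hd'.2]
    -- step 1 : main integral bound
    have hboundint : Integrable (fun z : EuclideanSpace ℝ (Fin (d+1)) × EuclideanSpace ℝ (Fin (d+1)) =>
        (Lj:ℝ) * dist z.1 z.2 + Eset.indicator (fun _ => (B:ℝ)) z) γ :=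
      (hdisti.const_mul _).add ((integrable_const (B:ℝ)).indicator hEm)
    have hstep1 : (∫ x, j x ∂ρ0Q) - (∫ x, j x ∂ρ1Q) ≤ (Lj:ℝ) * L + (B:ℝ) * (γ Eset).toReal := by
      rw [hint0, hint1, ← integral_sub hgi1 hgi2]
      calc ∫ z : EuclideanSpace ℝ (Fin (d+1)) × EuclideanSpace ℝ (Fin (d+1)),
            (((faceS d)ᶜ.indicator j) z.1 - ((faceS d)ᶜ.indicator j) z.2) ∂γ
          ≤ ∫ z : EuclideanSpace ℝ (Fin (d+1)) × EuclideanSpace ℝ (Fin (d+1)),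
            ((Lj:ℝ) * dist z.1 z.2 + Eset.indicator (fun _ => (B:ℝ)) z) ∂γ :=
            integral_mono_ae (hgi1.sub hgi2) hboundint hptw
        _ = (Lj:ℝ) * L + (B:ℝ) * (γ Eset).toReal := by
            rw [integral_add (hdisti.const_mul _) ((integrable_const _).indicator hEm),
              integral_const_mul, integral_indicator_const _ hEm]
            rw [smul_eq_mul, mul_comm (γ.real Eset), measureReal_def]
    -- Markov inequality
    have hmark : ∀ t : ℝ, 0 < t → γ {z : EuclideanSpace ℝ (Fin (d+1)) × EuclideanSpace ℝ (Fin (d+1)) |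
        t ≤ dist z.1 z.2} ≤ ENNReal.ofReal (L / t) := by
      intro t ht
      have h1 := mul_meas_ge_le_lintegral₀
        (μ := γ) (f := fun z => ENNReal.ofReal (dist z.1 z.2))
        (hdistc.measurable.ennreal_ofReal.aemeasurable) (ENNReal.ofReal t)
      have h2 : ∫⁻ z, ENNReal.ofReal (dist z.1 z.2) ∂γ = ENNReal.ofReal L :=
        (ofReal_integral_eq_lintegral_ofReal hdisti (ae_of_all _ fun z => dist_nonneg)).symm
      rw [h2] at h1
      have h3 : γ {z : EuclideanSpace ℝ (Fin (d+1)) × EuclideanSpace ℝ (Fin (d+1)) | t ≤ dist z.1 z.2}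
          ≤ γ {z | ENNReal.ofReal t ≤ ENNReal.ofReal (dist z.1 z.2)} :=
        measure_mono fun z hz => ENNReal.ofReal_le_ofReal hz
      have h4 : γ {z : EuclideanSpace ℝ (Fin (d+1)) × EuclideanSpace ℝ (Fin (d+1)) |
          ENNReal.ofReal t ≤ ENNReal.ofReal (dist z.1 z.2)} ≤ ENNReal.ofReal L / ENNReal.ofReal t := by
        rw [ENNReal.le_div_iff_mul_le (Or.inl (by simp [ht.le, ht, ENNReal.ofReal_eq_zero, not_le] ))
          (Or.inl ENNReal.ofReal_ne_top)]
        rwa [mul_comm]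
      rw [ENNReal.ofReal_div_of_pos ht]
      exact le_trans h3 h4
    -- bound on measure of exceptional set
    have hEbound : ∀ t : ℝ, 0 < t → (γ Eset).toReal ≤ 2*(L/t + kbar*t) := by
      intro t ht
      have hdivnn : 0 ≤ L / t := div_nonneg hL0 ht.le
      have hktnn : 0 ≤ kbar * t := mul_nonneg hk.le ht.le
      have hsub1 : {z : EuclideanSpace ℝ (Fin (d+1)) × EuclideanSpace ℝ (Fin (d+1)) |
            z.1 ∉ faceS d ∧ z.2 ∈ faceS d} ⊆
          ({z | t ≤ dist z.1 z.2} ∪ (Prod.fst ⁻¹' {x | x ∈ boxQ d ∧ -t < x (Fin.last d)}))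
            ∪ (Prod.fst ⁻¹' (boxQ d ∪ faceS d)ᶜ) := by
        rintro z ⟨hz1, hz2⟩
        by_cases hzb : z.1 ∈ boxQ d ∪ faceS d
        · have hzQ : z.1 ∈ boxQ d := hzb.resolve_right hz1
          by_cases hdt : t ≤ dist z.1 z.2
          · exact Or.inl (Or.inl hdt)
          · refine Or.inl (Or.inr ⟨hzQ, ?_⟩)
            push_neg at hdt
            have hco := dist_coord_le z.1 z.2 (Fin.last d)
            rw [hz2.2, sub_zero] at hco
            have habs : |z.1 (Fin.last d)| < t := lt_of_le_of_lt hco hdt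
            linarith [(abs_lt.mp habs).1]
        · exact Or.inr hzb
      have hsub2 : {z : EuclideanSpace ℝ (Fin (d+1)) × EuclideanSpace ℝ (Fin (d+1)) |
            z.1 ∈ faceS d ∧ z.2 ∉ faceS d} ⊆
          ({z | t ≤ dist z.1 z.2} ∪ (Prod.snd ⁻¹' {x | x ∈ boxQ d ∧ -t < x (Fin.last d)}))
            ∪ (Prod.snd ⁻¹' (boxQ d ∪ faceS d)ᶜ) := by
        rintro z ⟨hz1, hz2⟩
        by_cases hzb : z.2 ∈ boxQ d ∪ faceS d
        · have hzQ : z.2 ∈ boxQ d := hzb.resolve_right hz2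
          by_cases hdt : t ≤ dist z.1 z.2
          · exact Or.inl (Or.inl hdt)
          · refine Or.inl (Or.inr ⟨hzQ, ?_⟩)
            push_neg at hdt
            have hco := dist_coord_le z.1 z.2 (Fin.last d)
            rw [hz1.2] at hco
            have habs : |z.2 (Fin.last d)| < t := by
              rw [← abs_neg]
              calc |-(z.2 (Fin.last d))| = |0 - z.2 (Fin.last d)| := by ring_nf
                _ ≤ dist z.1 z.2 := hco
                _ < t := hdt
            linarith [(abs_lt.mp habs).1]
        · exact Or.inr hzb
      have hstripm : MeasurableSet {x : EuclideanSpace ℝ (Fin (d+1)) | x ∈ boxQ d ∧ -t < x (Fin.last d)} := by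
        have : {x : EuclideanSpace ℝ (Fin (d+1)) | x ∈ boxQ d ∧ -t < x (Fin.last d)} =
            boxQ d ∩ ((fun x : EuclideanSpace ℝ (Fin (d+1)) => x (Fin.last d)) ⁻¹' Set.Ioi (-t)) := by
          ext x; simp [Set.mem_setOf_eq]
        rw [this]
        exact hQm.inter ((contApply _).measurable measurableSet_Ioi)
      have hm1 : γ {z : EuclideanSpace ℝ (Fin (d+1)) × EuclideanSpace ℝ (Fin (d+1)) |
          z.1 ∉ faceS d ∧ z.2 ∈ faceS d} ≤ ENNReal.ofReal (L/t) + ENNReal.ofReal (kbar*t) := by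
        refine le_trans (measure_mono hsub1) ?_
        refine le_trans (measure_union_le _ _) ?_
        have hz3 : γ (Prod.fst ⁻¹' (boxQ d ∪ faceS d)ᶜ) = 0 := by
          rw [← Measure.map_apply measurable_fst (hQm.union hSm).compl, hcoup.1]
          exact hconc ρ0Q ρ0S f0 h0Q h0S
        rw [hz3, add_zero]
        refine le_trans (measure_union_le _ _) ?_
        apply add_le_add (hmark t ht)
        rw [← Measure.map_apply measurable_fst hstripm, hcoup.1]
        exact hstrip ρ0Q ρ0S f0 h0Q hf0 h0S t
      have hm2 : γ {z : EuclideanSpace ℝ (Fin (d+1)) × EuclideanSpace ℝ (Fin (d+1)) |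
          z.1 ∈ faceS d ∧ z.2 ∉ faceS d} ≤ ENNReal.ofReal (L/t) + ENNReal.ofReal (kbar*t) := by
        refine le_trans (measure_mono hsub2) ?_
        refine le_trans (measure_union_le _ _) ?_
        have hz3 : γ (Prod.snd ⁻¹' (boxQ d ∪ faceS d)ᶜ) = 0 := by
          rw [← Measure.map_apply measurable_snd (hQm.union hSm).compl, hcoup.2]
          exact hconc ρ1Q ρ1S f1 h1Q h1S
        rw [hz3, add_zero]
        refine le_trans (measure_union_le _ _) ?_
        apply add_le_add (hmark t ht)
        rw [← Measure.map_apply measurable_snd hstripm, hcoup.2]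
        exact hstrip ρ1Q ρ1S f1 h1Q hf1 h1S t
      have hEsub : Eset ⊆ {z : EuclideanSpace ℝ (Fin (d+1)) × EuclideanSpace ℝ (Fin (d+1)) |
          z.1 ∉ faceS d ∧ z.2 ∈ faceS d} ∪ {z | z.1 ∈ faceS d ∧ z.2 ∉ faceS d} := by
        intro z hz
        by_cases c1 : z.1 ∈ faceS d <;> by_cases c2 : z.2 ∈ faceS d <;>
          simp [hEdef, c1, c2] at hz ⊢
      have hfinal : γ Eset ≤ ENNReal.ofReal (2*(L/t + kbar*t)) := by
        refine le_trans (measure_mono hEsub) ?_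
        refine le_trans (measure_union_le _ _) ?_
        refine le_trans (add_le_add hm1 hm2) ?_
        rw [← ENNReal.ofReal_add (by positivity) (by positivity),
          ← ENNReal.ofReal_add (by positivity) (by positivity)]
        apply ENNReal.ofReal_le_ofReal
        ring_nf
        linarith
      exact ENNReal.toReal_le_of_le_ofReal (by positivity) hfinal
    -- choose t = sqrt (ℓ + ε)
    set t := Real.sqrt (ℓ + ε) with htdef
    have ht0 : 0 < t := Real.sqrt_pos.mpr (by linarith)
    have hLle : L ≤ ℓ + ε := hlt.le
    have hdiv : L / t ≤ t := by
      rw [htdef]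
      have hs0 : 0 < Real.sqrt (ℓ + ε) := Real.sqrt_pos.mpr (by linarith)
      calc L / Real.sqrt (ℓ + ε) ≤ (ℓ + ε) / Real.sqrt (ℓ + ε) :=
            (div_le_div_iff_of_pos_right hs0).mpr hLle
        _ = Real.sqrt (ℓ + ε) := Real.div_sqrt
    have hEb := hEbound t ht0
    have hBnn : (0:ℝ) ≤ B := B.coe_nonneg
    have hteq : t = Real.sqrt (ℓ + ε) := htdef
    calc (∫ x, j x ∂ρ0Q) - (∫ x, j x ∂ρ1Q) ≤ (Lj:ℝ) * L + (B:ℝ) * (γ Eset).toReal := hstep1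
      _ ≤ (Lj:ℝ) * (ℓ + ε) + (B:ℝ) * (2*(L/t + kbar*t)) := by
          apply add_le_add
          · exact mul_le_mul_of_nonneg_left hLle Lj.coe_nonneg
          · exact mul_le_mul_of_nonneg_left hEb hBnn
      _ ≤ (Lj:ℝ) * (ℓ + ε) + (B:ℝ) * (2*(t + kbar*t)) := by
          apply add_le_add_right
          apply mul_le_mul_of_nonneg_left _ hBnn
          have : L/t ≤ t := hdiv
          nlinarith
      _ = (Lj:ℝ) * (ℓ + ε) + 2*(1+kbar) * (B:ℝ) * t := by ring
      _ = (Lj:ℝ) * (ℓ + ε) + 2*(1+kbar) * (B:ℝ) * Real.sqrt (ℓ + ε) := by rw [hteq]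
  -- pass to the limit ε → 0⁺
  have hlim : Filter.Tendsto (fun ε : ℝ => (Lj:ℝ) * (ℓ + ε) + 2*(1+kbar) * (B:ℝ) * Real.sqrt (ℓ + ε))
      (nhdsWithin 0 (Set.Ioi 0)) (nhds ((Lj:ℝ) * ℓ + 2*(1+kbar) * (B:ℝ) * Real.sqrt ℓ)) := by
    have hc : Continuous (fun ε : ℝ => (Lj:ℝ) * (ℓ + ε) + 2*(1+kbar) * (B:ℝ) * Real.sqrt (ℓ + ε)) := by
      apply Continuous.add
      · exact continuous_const.mul (continuous_const.add continuous_id)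
      · exact continuous_const.mul ((continuous_const.add continuous_id).sqrt)
    have := hc.tendsto 0
    simp only [add_zero] at this
    exact this.mono_left nhdsWithin_le_nhds
  have hfin : (∫ x, j x ∂ρ0Q) - (∫ x, j x ∂ρ1Q) ≤ (Lj:ℝ)*ℓ + 2*(1+kbar)*(B:ℝ)*Real.sqrt ℓ := by
    refine ge_of_tendsto hlim ?_
    filter_upwards [self_mem_nhdsWithin] with ε hε
    exact hmain ε hε
  have hrw : (ℓ : ℝ) ^ (1/2 : ℝ) = Real.sqrt ℓ := (Real.sqrt_eq_rpow ℓ).symm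
  rw [hrw]
  have hLjnn : (0:ℝ) ≤ Lj := Lj.coe_nonneg
  have hBnn : (0:ℝ) ≤ B := B.coe_nonneg
  nlinarith [mul_nonneg hLjnn hℓ0, hfin]
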